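/- Almost every matrix Θ ∈ M_n(ℝ) ≅ ℝ^{n²} (with respect to Lebesgue measure) is badly approximable. -/

import Mathlib

open MeasureTheory

/-- A vector `a ∈ ℝⁿ` is badly approximable if it is `δ`-badly approximable for some
`δ > 0`. -/
def IsBadlyApproximableVec {n : ℕ} (a : Fin n → ℝ) : Prop :=
  ∃ δ > (0 : ℝ), ∃ c > (0 : ℝ), ∀ q : Fin n → ℤ, q ≠ 0 → ∀ m : ℤ,
    |(∑ i, (q i : ℝ) * a i) - (m : ℝ)| ≥
      c * (Real.sqrt (∑ i, ((q i : ℝ)) ^ 2)) ^ (-δ)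

/-- `Θ ∈ M_n(ℝ)` is badly approximable if `ᵗΘ(u)` is a badly approximable vector for
some `u ∈ ℤⁿ`. -/
def IsBadlyApproximableMatrix {n : ℕ} (Θ : Matrix (Fin n) (Fin n) ℝ) : Prop :=
  ∃ u : Fin n → ℤ, IsBadlyApproximableVec (Θ.transpose.mulVec (fun i => (u i : ℝ)))

/- ### Auxiliary material -/

open Finset ENNReal

noncomputable def gz : ℤ → ℝ := fun k => if k = 0 then 1 else 1/(k:ℝ)^2

lemma gz_nonneg (k : ℤ) : 0 ≤ gz k := by
  unfold gz; split <;> positivity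

lemma gz_summable : Summable gz := by
  have h : Summable (fun k : ℤ => 1/(k:ℝ)^2) := Real.summable_one_div_int_pow.mpr one_lt_two
  have h2 := ((hasSum_ite_eq (0:ℤ) (1:ℝ)).summable.add h)
  apply h2.congr
  intro k
  by_cases hk : k = 0 <;> simp [gz, hk]

noncomputable def Gz : ℤ → ℝ≥0∞ := fun k => ENNReal.ofReal (gz k)

lemma Gz_tsum_ne_top : ∑' k, Gz k ≠ ⊤ := by
  rw [show Gz = fun k => ENNReal.ofReal (gz k) from rfl,
    ← ENNReal.ofReal_tsum_of_nonneg gz_nonneg gz_summable]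
  exact ENNReal.ofReal_ne_top

lemma tsum_pi_prod (n : ℕ) (G : ℤ → ℝ≥0∞) :
    ∑' q : Fin n → ℤ, ∏ i, G (q i) = (∑' k, G k)^n := by
  induction n with
  | zero =>
    rw [tsum_eq_single (fun _ => (0:ℤ)) (fun b hb => absurd (Subsingleton.elim b _) hb)]
    simp
  | succ n ih =>
    rw [← (Fin.consEquiv (fun _ : Fin (n+1) => ℤ)).tsum_eq (fun q => ∏ i, G (q i))]
    have h : ∀ p : ℤ × (Fin n → ℤ), (∏ i, G (((Fin.consEquiv (fun _ : Fin (n+1) => ℤ)) p) i))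
        = G p.1 * ∏ i, G (p.2 i) := by
      intro p
      simp [Fin.consEquiv, Fin.prod_univ_succ]
    rw [tsum_congr h, ENNReal.tsum_prod']
    simp_rw [ENNReal.tsum_mul_left]
    rw [ENNReal.tsum_mul_right, ih, pow_succ]
    ring

lemma ofReal_prod_gz {n : ℕ} (q : Fin n → ℤ) :
    ENNReal.ofReal (∏ i, gz (q i)) = ∏ i, Gz (q i) := by
  induction n with
  | zero => simp
  | succ n ih =>
    rw [Fin.prod_univ_succ, Fin.prod_univ_succ, ENNReal.ofReal_mul (gz_nonneg _)]
    rw [ih (fun i => q i.succ)]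
    rfl

/-- The maximum of `|q i|`. -/
noncomputable def Mq {n : ℕ} (q : Fin (n+1) → ℤ) : ℤ :=
  univ.sup' (univ_nonempty) fun i => |q i|

lemma le_Mq {n : ℕ} (q : Fin (n+1) → ℤ) (i : Fin (n+1)) : |q i| ≤ Mq q := by
  unfold Mq; exact Finset.le_sup' (fun i => |q i|) (mem_univ i)

lemma exists_Mq {n : ℕ} (q : Fin (n+1) → ℤ) : ∃ i, |q i| = Mq q := by
  obtain ⟨i, _, hi⟩ := Finset.exists_mem_eq_sup' (univ_nonempty) fun i : Fin (n+1) => |q i|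
  exact ⟨i, hi.symm⟩

lemma one_le_Mq {n : ℕ} {q : Fin (n+1) → ℤ} (hq : q ≠ 0) : 1 ≤ Mq q := by
  obtain ⟨i, hi⟩ : ∃ i, q i ≠ 0 := by
    by_contra h
    push_neg at h
    exact hq (funext fun i => h i)
  calc (1:ℤ) ≤ |q i| := Int.one_le_abs hi
    _ ≤ Mq q := le_Mq q i

lemma Mq_le_sqrt {n : ℕ} (q : Fin (n+1) → ℤ) :
    (Mq q : ℝ) ≤ Real.sqrt (∑ i, ((q i : ℝ)) ^ 2) := by
  obtain ⟨i₀, hi₀⟩ := exists_Mq q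
  have h1 : (0:ℝ) ≤ Mq q := by
    have := abs_nonneg (q i₀); exact_mod_cast hi₀ ▸ this
  rw [Real.le_sqrt h1 (by positivity)]
  calc (Mq q : ℝ)^2 = ((q i₀ : ℝ))^2 := by
        rw [← hi₀]; push_cast; rw [sq_abs]
    _ ≤ ∑ i, ((q i : ℝ)) ^ 2 :=
        Finset.single_le_sum (f := fun i => ((q i:ℝ))^2) (fun i _ => by positivity) (mem_univ i₀)

/- slab lemma -/
lemma slab_bound (N R : ℕ) (q : Fin (N+1) → ℤ) (i₀ : Fin (N+1)) (h0 : q i₀ ≠ 0)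
    (t ε : ℝ) :
    volume ({a : Fin (N+1) → ℝ | |(∑ i, (q i:ℝ) * a i) - t| < ε} ∩ {a | ∀ i, |a i| ≤ (R:ℝ)}) ≤
      ENNReal.ofReal (2*ε / |(q i₀ : ℝ)|) * (ENNReal.ofReal (2*R))^N := by
  set c : ℝ := (q i₀ : ℝ) with hc
  have hcne : c ≠ 0 := Int.cast_ne_zero.mpr h0
  set C : Set (Fin N → ℝ) := Set.univ.pi fun _ => Set.Icc (-(R:ℝ)) R with hC
  have hCmeas : MeasurableSet C := MeasurableSet.univ_pi fun _ => measurableSet_Icc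
  set T : Set (ℝ × (Fin N → ℝ)) :=
    {p | |c * p.1 + (∑ j, (q (i₀.succAbove j) : ℝ) * p.2 j) - t| < ε} ∩ (Set.univ ×ˢ C) with hT
  have hTmeas : MeasurableSet T := by
    apply MeasurableSet.inter
    · have hf : Measurable fun p : ℝ × (Fin N → ℝ) =>
        |c * p.1 + (∑ j, (q (i₀.succAbove j) : ℝ) * p.2 j) - t| := by
        apply Measurable.abs
        apply Measurable.sub _ measurable_const
        apply Measurable.add
        · exact (measurable_fst.const_mul c)
        · exact Finset.measurable_sum univ fun j _ =>
            ((measurable_pi_apply j).comp measurable_snd).const_mul _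
      exact measurableSet_lt hf measurable_const
    · exact MeasurableSet.univ.prod hCmeas
  have hsub : ({a : Fin (N+1) → ℝ | |(∑ i, (q i:ℝ) * a i) - t| < ε} ∩ {a | ∀ i, |a i| ≤ (R:ℝ)})
      ⊆ (MeasurableEquiv.piFinSuccAbove (fun _ : Fin (N+1) => ℝ) i₀) ⁻¹' T := by
    rintro a ⟨ha1, ha2⟩
    constructor
    · show |c * a i₀ + (∑ j, (q (i₀.succAbove j) : ℝ) * (i₀.removeNth a) j) - t| < ε
      have hrm : (i₀.removeNth a) = fun j => a (i₀.succAbove j) := rfl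
      rw [hrm, show (c * a i₀ + (∑ j, (q (i₀.succAbove j) : ℝ) * a (i₀.succAbove j)))
          = ∑ i, (q i:ℝ) * a i from (Fin.sum_univ_succAbove (fun i => (q i:ℝ) * a i) i₀).symm]
      exact ha1
    · refine ⟨trivial, fun j _ => ?_⟩
      have := ha2 (i₀.succAbove j)
      rw [abs_le] at this
      exact ⟨this.1, this.2⟩
  calc volume _ ≤ volume ((MeasurableEquiv.piFinSuccAbove (fun _ : Fin (N+1) => ℝ) i₀) ⁻¹' T) :=
        measure_mono hsub
    _ = ((volume : Measure ℝ).prod (volume : Measure (Fin N → ℝ))) T := by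
        rw [volume_pi]
        exact (measurePreserving_piFinSuccAbove (fun _ : Fin (N+1) => (volume : Measure ℝ)) i₀).measure_preimage hTmeas.nullMeasurableSet
    _ ≤ ENNReal.ofReal (2*ε / |c|) * (ENNReal.ofReal (2*R))^N := by
        rw [Measure.prod_apply_symm hTmeas]
        have hslice : ∀ y : Fin N → ℝ, volume ((fun x => (x, y)) ⁻¹' T) ≤
            C.indicator (fun _ => ENNReal.ofReal (2*ε / |c|)) y := by
          intro y
          by_cases hy : y ∈ C
          · rw [Set.indicator_of_mem hy]
            have hss : ((fun x => (x, y)) ⁻¹' T) ⊆ (fun x => c * x) ⁻¹' Set.Ioo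
                ((t - (∑ j, (q (i₀.succAbove j) : ℝ) * y j)) - ε)
                ((t - (∑ j, (q (i₀.succAbove j) : ℝ) * y j)) + ε) := by
              rintro x ⟨hx1, _⟩
              simp only [Set.mem_setOf_eq] at hx1
              have := abs_lt.1 hx1
              simp only [Set.mem_preimage, Set.mem_Ioo]
              constructor <;> linarith [this.1, this.2]
            refine le_trans (measure_mono hss) ?_
            rw [Real.volume_preimage_mul_left hcne, Real.volume_Ioo]
            rw [← ENNReal.ofReal_mul (abs_nonneg _)]
            apply ENNReal.ofReal_le_ofReal
            apply le_of_eq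
            rw [abs_inv]
            field_simp
            ring
          · rw [Set.indicator_of_notMem hy]
            have hem : ((fun x => (x, y)) ⁻¹' T) = ∅ := by
              ext x; simp only [Set.mem_preimage, Set.mem_empty_iff_false, iff_false]
              rintro ⟨_, _, h2⟩
              exact hy h2
            simp [hem]
        refine le_trans (lintegral_mono hslice) ?_
        rw [lintegral_indicator hCmeas, setLIntegral_const]
        have hvC : volume C = (ENNReal.ofReal (2*R))^N := by
          rw [hC, volume_pi, Measure.pi_pi]
          simp only [Real.volume_Icc]
          rw [Finset.prod_const, Finset.card_univ, Fintype.card_fin]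
          congr 1
          ring
        rw [hvC]

lemma cube_null (N R : ℕ) :
    volume ({a : Fin (N+1) → ℝ | ¬ IsBadlyApproximableVec a} ∩ {a | ∀ i, |a i| ≤ (R:ℝ)}) = 0 := by
  classical
  set δ : ℝ := 2*(N+1) with hδ
  have hδpos : 0 < δ := by positivity
  set ε : ℕ → (Fin (N+1) → ℤ) → ℝ :=
    fun j q => (1/((j:ℝ)+1)) * (Real.sqrt (∑ i, ((q i : ℝ)) ^ 2)) ^ (-δ) with hε
  set F : ℕ → (Fin (N+1) → ℤ) × ℤ → Set (Fin (N+1) → ℝ) := fun j p =>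
    if p.1 = 0 then ∅ else
      ({a | |(∑ i, (p.1 i:ℝ) * a i) - (p.2:ℝ)| < ε j p.1} ∩ {a | ∀ i, |a i| ≤ (R:ℝ)}) with hF
  have hsq1 : ∀ q : Fin (N+1) → ℤ, q ≠ 0 → 1 ≤ Real.sqrt (∑ i, ((q i : ℝ)) ^ 2) := by
    intro q hq
    calc (1:ℝ) ≤ (Mq q : ℝ) := by exact_mod_cast one_le_Mq hq
      _ ≤ _ := Mq_le_sqrt q
  have hjpos : ∀ j : ℕ, (0:ℝ) < 1/((j:ℝ)+1) := by intro j; positivity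
  have hεnn : ∀ j q, 0 ≤ ε j q := by
    intro j q
    apply mul_nonneg (le_of_lt (hjpos j))
    exact Real.rpow_nonneg (Real.sqrt_nonneg _) _
  have hε1 : ∀ j q, q ≠ 0 → ε j q ≤ 1 := by
    intro j q hq
    rw [hε]
    have h1 : (Real.sqrt (∑ i, ((q i : ℝ)) ^ 2)) ^ (-δ) ≤ 1 :=
      Real.rpow_le_one_of_one_le_of_nonpos (hsq1 q hq) (by linarith)
    have h2 : 1/((j:ℝ)+1) ≤ 1 := by
      rw [div_le_one (by positivity)]; linarith [Nat.cast_nonneg (α := ℝ) j]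
    calc (1/((j:ℝ)+1)) * (Real.sqrt (∑ i, ((q i : ℝ)) ^ 2)) ^ (-δ)
        ≤ 1 * 1 := mul_le_mul h2 h1 (Real.rpow_nonneg (Real.sqrt_nonneg _) _) zero_le_one
      _ = 1 := mul_one 1
  have hεprod : ∀ (j : ℕ) (q : Fin (N+1) → ℤ), q ≠ 0 →
      ε j q ≤ (1/((j:ℝ)+1)) * ∏ i, gz (q i) := by
    intro j q hq
    apply mul_le_mul_of_nonneg_left _ (le_of_lt (hjpos j))
    have hM1 : (1:ℝ) ≤ (Mq q : ℝ) := by exact_mod_cast one_le_Mq hq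
    have hMpos : (0:ℝ) < (Mq q : ℝ) := by linarith
    have step1 : (Real.sqrt (∑ i, ((q i : ℝ)) ^ 2)) ^ (-δ) ≤ ((Mq q : ℝ)) ^ (-δ) :=
      Real.rpow_le_rpow_of_nonpos hMpos (Mq_le_sqrt q) (by linarith)
    refine le_trans step1 ?_
    have hrw : ((Mq q : ℝ)) ^ (-δ) = (((Mq q : ℝ))^(2*(N+1) : ℕ))⁻¹ := by
      rw [Real.rpow_neg (le_of_lt hMpos), hδ]
      congr 1
      rw [← Real.rpow_natCast]
      congr 1
      push_cast; ring
    rw [hrw]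
    have hsplit : (((Mq q : ℝ))^(2*(N+1) : ℕ))⁻¹ = ∏ _i : Fin (N+1), (((Mq q : ℝ))^2)⁻¹ := by
      rw [Finset.prod_const, Finset.card_univ, Fintype.card_fin, inv_pow, ← pow_mul]
    rw [hsplit]
    apply Finset.prod_le_prod (fun i _ => by positivity)
    intro i _
    by_cases hqi : q i = 0
    · simp only [gz, hqi, if_true]
      rw [inv_le_one_iff₀]
      right
      nlinarith
    · simp only [gz, hqi, if_false, one_div]
      have hqi' : (1:ℝ) ≤ ((q i:ℝ))^2 := by
        have h5 : (1:ℤ) ≤ (q i)^2 := by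
          nlinarith [Int.one_le_abs hqi, sq_abs (q i), abs_nonneg (q i)]
        exact_mod_cast h5
      have hle : ((q i:ℝ))^2 ≤ ((Mq q:ℝ))^2 := by
        have h3 : ((|q i| : ℤ) : ℝ) ≤ (Mq q : ℝ) := by exact_mod_cast le_Mq q i
        have h4 : (0:ℝ) ≤ ((|q i| : ℤ) : ℝ) := by exact_mod_cast abs_nonneg (q i)
        have h2 : ((q i : ℝ))^2 = ((|q i|:ℤ) : ℝ)^2 := by push_cast; rw [sq_abs]
        nlinarith
      exact inv_anti₀ (by linarith) hle
  -- subset step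
  have hsub : ∀ j : ℕ,
      ({a : Fin (N+1) → ℝ | ¬ IsBadlyApproximableVec a} ∩ {a | ∀ i, |a i| ≤ (R:ℝ)})
      ⊆ ⋃ p : (Fin (N+1) → ℤ) × ℤ, F j p := by
    intro j a ⟨ha, hacube⟩
    simp only [IsBadlyApproximableVec] at ha
    push_neg at ha
    obtain ⟨q, hq0, m, hm⟩ := ha δ hδpos (1/((j:ℝ)+1)) (hjpos j)
    rw [Set.mem_iUnion]
    refine ⟨(q, m), ?_⟩
    rw [hF]
    simp only [if_neg hq0]
    exact ⟨hm, hacube⟩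
  -- per-q bound
  set K : ℝ≥0∞ := ENNReal.ofReal (2*(2*(N+1)*R+3)) * (ENNReal.ofReal (2*(R:ℝ)))^N with hK
  have hqsum : ∀ (j : ℕ) (q : Fin (N+1) → ℤ),
      ∑' m : ℤ, volume (F j (q, m)) ≤
        ENNReal.ofReal (1/((j:ℝ)+1)) * K * ∏ i, Gz (q i) := by
    intro j q
    by_cases hq0 : q = 0
    · simp [hF, hq0]
    · have hM1 : (1:ℤ) ≤ Mq q := one_le_Mq hq0
      have hM1R : (1:ℝ) ≤ (Mq q : ℝ) := by exact_mod_cast hM1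
      have hMposR : (0:ℝ) < (Mq q : ℝ) := by linarith
      obtain ⟨i₀, hi₀⟩ := exists_Mq q
      have hqi₀ : q i₀ ≠ 0 := by
        intro h
        rw [h] at hi₀
        simp at hi₀
        omega
      have habs : |(q i₀ : ℝ)| = (Mq q : ℝ) := by
        rw [← hi₀]; push_cast; rfl
      set B : ℤ := (N+1)*R*(Mq q)+1 with hB
      have hBnn : (0:ℤ) ≤ B := by positivity
      -- vanishing outside Icc
      have hvanish : ∀ m : ℤ, m ∉ Finset.Icc (-B) B → volume (F j (q, m)) = 0 := by
        intro m hm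
        have hmB : B < |m| := by
          simp only [Finset.mem_Icc, not_and_or, not_le] at hm
          rcases hm with h | h
          · rw [abs_of_neg (by omega)]; omega
          · rw [abs_of_pos (by omega)]; omega
        have : F j (q, m) = ∅ := by
          rw [hF]
          simp only [if_neg hq0]
          ext a
          simp only [Set.mem_inter_iff, Set.mem_setOf_eq, Set.mem_empty_iff_false, iff_false,
            not_and]
          intro h1 h2
          have hsum_bound : |(∑ i, (q i:ℝ) * a i)| ≤ (N+1) * (Mq q : ℝ) * R := by
            calc |(∑ i, (q i:ℝ) * a i)| ≤ ∑ i, |(q i:ℝ) * a i| := Finset.abs_sum_le_sum_abs _ _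
              _ ≤ ∑ _i : Fin (N+1), (Mq q : ℝ) * R := by
                  apply Finset.sum_le_sum
                  intro i _
                  rw [abs_mul]
                  apply mul_le_mul _ (h2 i) (abs_nonneg _) (le_of_lt hMposR)
                  rw [← habs]
                  have : |q i| ≤ |q i₀| := hi₀ ▸ le_Mq q i
                  calc |(q i : ℝ)| = ((|q i| : ℤ) : ℝ) := by push_cast; rfl
                    _ ≤ ((|q i₀| : ℤ) : ℝ) := by exact_mod_cast this
                    _ = |(q i₀ : ℝ)| := by push_cast; rfl
              _ = (N+1) * (Mq q : ℝ) * R := by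
                  rw [Finset.sum_const, Finset.card_univ, Fintype.card_fin]
                  push_cast; ring
          have hlt1 : |(∑ i, (q i:ℝ) * a i) - (m:ℝ)| < 1 := lt_of_lt_of_le h1 (hε1 j q hq0)
          have hmR : (|m| : ℝ) < (B : ℝ) := by
            calc (|m| : ℝ) = |(m:ℝ)| := by push_cast; rfl
              _ ≤ |(∑ i, (q i:ℝ) * a i) - (m:ℝ)| + |(∑ i, (q i:ℝ) * a i)| := by
                  have := abs_sub_abs_le_abs_sub (m:ℝ) (∑ i, (q i:ℝ) * a i)
                  have h3 := abs_sub_comm (m:ℝ) (∑ i, (q i:ℝ) * a i)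
                  linarith [abs_nonneg (∑ i, (q i:ℝ) * a i),
                    abs_sub (m:ℝ) (∑ i, (q i:ℝ) * a i)]
              _ < 1 + (N+1) * (Mq q : ℝ) * R := by linarith
              _ = (B : ℝ) := by rw [hB]; push_cast; ring
          have : (B:ℝ) < (|m|:ℝ) := by exact_mod_cast hmB
          linarith
        rw [this]; exact measure_empty
      -- slab bound for each m
      have hslab : ∀ m : ℤ, volume (F j (q, m)) ≤
          ENNReal.ofReal (2 * ε j q / (Mq q : ℝ)) * (ENNReal.ofReal (2*(R:ℝ)))^N := by
        intro m
        rw [hF]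
        simp only [if_neg hq0]
        have := slab_bound N R q i₀ hqi₀ (m:ℝ) (ε j q)
        rwa [habs] at this
      calc ∑' m : ℤ, volume (F j (q, m))
          = ∑ m ∈ Finset.Icc (-B) B, volume (F j (q, m)) := tsum_eq_sum hvanish
        _ ≤ (Finset.Icc (-B) B).card •
              (ENNReal.ofReal (2 * ε j q / (Mq q : ℝ)) * (ENNReal.ofReal (2*(R:ℝ)))^N) :=
            Finset.sum_le_card_nsmul _ _ _ (fun m _ => hslab m)
        _ = ((Finset.Icc (-B) B).card : ℝ≥0∞) *
              (ENNReal.ofReal (2 * ε j q / (Mq q : ℝ)) * (ENNReal.ofReal (2*(R:ℝ)))^N) := by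
            rw [nsmul_eq_mul]
        _ ≤ ENNReal.ofReal ((2*(N+1)*R+3) * (Mq q : ℝ)) *
              (ENNReal.ofReal (2 * ε j q / (Mq q : ℝ)) * (ENNReal.ofReal (2*(R:ℝ)))^N) := by
            apply mul_le_mul_left
            rw [← ENNReal.ofReal_natCast]
            apply ENNReal.ofReal_le_ofReal
            have hcard : (Finset.Icc (-B) B).card = (2*B+1).toNat := by
              rw [Int.card_Icc]
              congr 1
              ring
            rw [hcard]
            have hnn : (0:ℤ) ≤ 2*B+1 := by omega
            have h2B : (((2*B+1).toNat : ℕ) : ℝ) = ((2*B+1 : ℤ) : ℝ) := by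
              exact_mod_cast Int.toNat_of_nonneg hnn
            rw [h2B, hB]
            push_cast
            nlinarith [Nat.cast_nonneg (α := ℝ) R, Nat.cast_nonneg (α := ℝ) N]
        _ ≤ ENNReal.ofReal (1/((j:ℝ)+1)) * K * ∏ i, Gz (q i) := by
            rw [← mul_assoc, ← ENNReal.ofReal_mul (by positivity)]
            have heq : (2*(N+1)*R+3) * (Mq q : ℝ) * (2 * ε j q / (Mq q : ℝ))
                = (2*(2*(N+1)*R+3)) * ε j q := by
              field_simp
            rw [heq]
            have hle : (2*(2*(N+1)*(R:ℝ)+3)) * ε j q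
                ≤ (1/((j:ℝ)+1)) * ((2*(2*(N+1)*(R:ℝ)+3)) * ∏ i, gz (q i)) := by
              have hC : (0:ℝ) ≤ 2*(2*(N+1)*(R:ℝ)+3) := by positivity
              calc (2*(2*(N+1)*(R:ℝ)+3)) * ε j q
                  ≤ (2*(2*(N+1)*(R:ℝ)+3)) * ((1/((j:ℝ)+1)) * ∏ i, gz (q i)) :=
                    mul_le_mul_of_nonneg_left (hεprod j q hq0) hC
                _ = (1/((j:ℝ)+1)) * ((2*(2*(N+1)*(R:ℝ)+3)) * ∏ i, gz (q i)) := by ring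
            calc ENNReal.ofReal ((2*(2*(N+1)*(R:ℝ)+3)) * ε j q) * (ENNReal.ofReal (2*(R:ℝ)))^N
                ≤ ENNReal.ofReal ((1/((j:ℝ)+1)) * ((2*(2*(N+1)*(R:ℝ)+3)) * ∏ i, gz (q i))) *
                    (ENNReal.ofReal (2*(R:ℝ)))^N := by
                  exact mul_le_mul_left (ENNReal.ofReal_le_ofReal hle) _
              _ = ENNReal.ofReal (1/((j:ℝ)+1)) * K * ∏ i, Gz (q i) := by
                  rw [ENNReal.ofReal_mul (by positivity), ENNReal.ofReal_mul (by positivity),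
                    ofReal_prod_gz, hK]
                  ring
  -- total bound for each j
  set A : ℝ≥0∞ := K * (∑' k, Gz k)^(N+1) with hA
  have hAne : A ≠ ⊤ := by
    rw [hA, hK]
    apply ENNReal.mul_ne_top
    · exact ENNReal.mul_ne_top ENNReal.ofReal_ne_top (ENNReal.pow_ne_top ENNReal.ofReal_ne_top)
    · exact ENNReal.pow_ne_top Gz_tsum_ne_top
  have htotal : ∀ j : ℕ,
      volume ({a : Fin (N+1) → ℝ | ¬ IsBadlyApproximableVec a} ∩ {a | ∀ i, |a i| ≤ (R:ℝ)})
        ≤ ENNReal.ofReal (1/((j:ℝ)+1)) * A := by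
    intro j
    calc volume ({a : Fin (N+1) → ℝ | ¬ IsBadlyApproximableVec a} ∩ {a | ∀ i, |a i| ≤ (R:ℝ)})
        ≤ volume (⋃ p : (Fin (N+1) → ℤ) × ℤ, F j p) := measure_mono (hsub j)
      _ ≤ ∑' p : (Fin (N+1) → ℤ) × ℤ, volume (F j p) := measure_iUnion_le _
      _ = ∑' q : Fin (N+1) → ℤ, ∑' m : ℤ, volume (F j (q, m)) := ENNReal.tsum_prod'
      _ ≤ ∑' q : Fin (N+1) → ℤ, ENNReal.ofReal (1/((j:ℝ)+1)) * K * ∏ i, Gz (q i) :=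
          ENNReal.tsum_le_tsum (fun q => hqsum j q)
      _ = ENNReal.ofReal (1/((j:ℝ)+1)) * K * ∑' q : Fin (N+1) → ℤ, ∏ i, Gz (q i) :=
          ENNReal.tsum_mul_left
      _ = ENNReal.ofReal (1/((j:ℝ)+1)) * A := by
          rw [tsum_pi_prod (N+1) Gz, hA]
          ring
  have hlim : Filter.Tendsto (fun j : ℕ => ENNReal.ofReal (1/((j:ℝ)+1)) * A)
      Filter.atTop (nhds 0) := by
    have h1 : Filter.Tendsto (fun j : ℕ => ENNReal.ofReal (1/((j:ℝ)+1)))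
        Filter.atTop (nhds 0) := by
      rw [show (0:ℝ≥0∞) = ENNReal.ofReal 0 by simp]
      apply ENNReal.tendsto_ofReal
      exact tendsto_one_div_add_atTop_nhds_zero_nat
    have := ENNReal.Tendsto.mul_const h1 (Or.inr hAne)
    simpa using this
  have hle0 := ge_of_tendsto' hlim htotal
  exact le_antisymm hle0 zero_le

lemma ae_badVec (N : ℕ) :
    volume {a : Fin (N+1) → ℝ | ¬ IsBadlyApproximableVec a} = 0 := by
  have hsub : {a : Fin (N+1) → ℝ | ¬ IsBadlyApproximableVec a} ⊆
      ⋃ R : ℕ, ({a : Fin (N+1) → ℝ | ¬ IsBadlyApproximableVec a} ∩ {a | ∀ i, |a i| ≤ (R:ℝ)}) := by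
    intro a ha
    rw [Set.mem_iUnion]
    refine ⟨Nat.ceil (Finset.univ.sup' Finset.univ_nonempty fun i => |a i|), ha, fun i => ?_⟩
    calc |a i| ≤ Finset.univ.sup' Finset.univ_nonempty (fun i => |a i|) :=
          Finset.le_sup' (fun i => |a i|) (Finset.mem_univ i)
      _ ≤ _ := Nat.le_ceil _
  apply le_antisymm _ zero_le
  calc volume {a : Fin (N+1) → ℝ | ¬ IsBadlyApproximableVec a}
      ≤ volume (⋃ R : ℕ, ({a : Fin (N+1) → ℝ | ¬ IsBadlyApproximableVec a}
          ∩ {a | ∀ i, |a i| ≤ (R:ℝ)})) := measure_mono hsub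
    _ ≤ ∑' R : ℕ, volume ({a : Fin (N+1) → ℝ | ¬ IsBadlyApproximableVec a}
          ∩ {a | ∀ i, |a i| ≤ (R:ℝ)}) := measure_iUnion_le _
    _ = 0 := by simp [cube_null]

/-- Almost every matrix `Θ ∈ M_n(ℝ) ≅ ℝ^{n²}` is badly approximable. -/
theorem ae_badlyApproximable_matrix (n : ℕ) :
    volume {Θ : Fin n → Fin n → ℝ | ¬ IsBadlyApproximableMatrix (Matrix.of Θ)} = 0 := by
  cases n with
  | zero =>
    have : {Θ : Fin 0 → Fin 0 → ℝ | ¬ IsBadlyApproximableMatrix (Matrix.of Θ)} = ∅ := by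
      ext Θ
      simp only [Set.mem_setOf_eq, Set.mem_empty_iff_false, iff_false, not_not]
      exact ⟨0, 1, one_pos, 1, one_pos, fun q hq _ => absurd (Subsingleton.elim q 0) hq⟩
    rw [this, measure_empty]
  | succ N =>
    have key : {Θ : Fin (N+1) → Fin (N+1) → ℝ | ¬ IsBadlyApproximableMatrix (Matrix.of Θ)}
        ⊆ {Θ : Fin (N+1) → Fin (N+1) → ℝ | ¬ IsBadlyApproximableVec (Θ 0)} := by
      intro Θ h hvec
      apply h
      refine ⟨Pi.single 0 1, ?_⟩
      have heq : (Matrix.of Θ).transpose.mulVec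
          (fun i => ((Pi.single (0 : Fin (N+1)) (1:ℤ) : Fin (N+1) → ℤ) i : ℝ)) = Θ 0 := by
        funext i
        simp only [Matrix.mulVec, Matrix.transpose_apply, Matrix.of_apply, dotProduct,
          Pi.single_apply]
        rw [Finset.sum_eq_single (0 : Fin (N+1))]
        · simp
        · intro j _ hj
          simp [hj]
        · intro hmem
          exact absurd (Finset.mem_univ _) hmem
      rw [heq]
      exact hvec
    set Nset := toMeasurable volume {a : Fin (N+1) → ℝ | ¬ IsBadlyApproximableVec a} with hNset
    have h0 : volume Nset = 0 := by
      rw [hNset, measure_toMeasurable]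
      exact ae_badVec N
    have hsub2 : {Θ : Fin (N+1) → Fin (N+1) → ℝ | ¬ IsBadlyApproximableVec (Θ 0)} ⊆
        Set.univ.pi (fun i : Fin (N+1) => if i = 0 then Nset else Set.univ) := by
      intro Θ h
      rw [Set.mem_univ_pi]
      intro i
      by_cases hi : i = 0
      · subst hi
        simp only [if_pos rfl]
        exact subset_toMeasurable _ _ h
      · simp [hi]
    apply le_antisymm _ zero_le
    calc volume {Θ : Fin (N+1) → Fin (N+1) → ℝ | ¬ IsBadlyApproximableMatrix (Matrix.of Θ)}
        ≤ volume (Set.univ.pi (fun i : Fin (N+1) => if i = 0 then Nset else Set.univ)) :=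
          measure_mono (key.trans hsub2)
      _ = ∏ i : Fin (N+1), volume (if i = 0 then Nset else Set.univ) := by
          rw [volume_pi, Measure.pi_pi]
      _ = 0 := Finset.prod_eq_zero (Finset.mem_univ 0) (by simp [h0])
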